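/- There exist binary random variables X, Y such that s*(X;Y) ≠ s*(Y;X); specifically, with P(X=0) = 0.85, P(Y=0) = 0.39, P(X=0,Y=0) = 0.36, one has s*(X;Y) > s*(Y;X). -/

import Mathlib

open scoped BigOperators

noncomputable section

/-- `p` is a probability mass function on a finite type. -/
def IsPMF {X : Type*} [Fintype X] (p : X → ℝ) : Prop :=
  (∀ x, 0 ≤ p x) ∧ ∑ x, p x = 1

/-- `p` is a joint probability mass function. -/
def IsJointPMF {X Y : Type*} [Fintype X] [Fintype Y] (p : X → Y → ℝ) : Prop :=
  (∀ x y, 0 ≤ p x y) ∧ ∑ x, ∑ y, p x y = 1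

/-- Hirschfeld–Gebelein–Rényi maximal correlation of a joint pmf `p`. -/
def maxCorr {X Y : Type*} [Fintype X] [Fintype Y] (p : X → Y → ℝ) : ℝ :=
  sSup {c : ℝ | ∃ f : X → ℝ, ∃ g : Y → ℝ,
    (∑ x, ∑ y, p x y * f x) = 0 ∧ (∑ x, ∑ y, p x y * g y) = 0 ∧
    (∑ x, ∑ y, p x y * (f x)^2) = 1 ∧ (∑ x, ∑ y, p x y * (g y)^2) = 1 ∧
    c = ∑ x, ∑ y, p x y * f x * g y}

/-- Relative entropy (KL divergence) between pmfs on a finite type. -/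
def KL {X : Type*} [Fintype X] (r p : X → ℝ) : ℝ :=
  ∑ x, r x * Real.log (r x / p x)

/-- `s*(X;Y)` for input distribution `p` and channel `W`. -/
def sStar {X Y : Type*} [Fintype X] [Fintype Y] (p : X → ℝ) (W : X → Y → ℝ) : ℝ :=
  sSup {c : ℝ | ∃ r : X → ℝ, IsPMF r ∧ r ≠ p ∧
    c = KL (fun y => ∑ x, r x * W x y) (fun y => ∑ x, p x * W x y) / KL r p}

/-- Shannon entropy of a pmf on a finite type. -/
def entropy {X : Type*} [Fintype X] (p : X → ℝ) : ℝ :=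
  ∑ x, Real.negMulLog (p x)

/-- Mutual information of a joint pmf. -/
def mutInfo {X Y : Type*} [Fintype X] [Fintype Y] (p : X → Y → ℝ) : ℝ :=
  entropy (fun x => ∑ y, p x y) + entropy (fun y => ∑ x, p x y)
    - entropy (fun z : X × Y => p z.1 z.2)

end

/-- The joint pmf of Remark: `P(X=0,Y=0)=0.36`, `P(X=0,Y=1)=0.49`, `P(X=1,Y=0)=0.03`,
`P(X=1,Y=1)=0.12`, so `P(X=0)=0.85` and `P(Y=0)=0.39`. -/
def P19 : Fin 2 → Fin 2 → ℝ := ![![0.36, 0.49], ![0.03, 0.12]]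


namespace SStarAux

open Real

/-- Binary KL divergence of `(p+ε, 1-p-ε)` from `(p, 1-p)`. -/
noncomputable def k (p ε : ℝ) : ℝ :=
  (p + ε) * Real.log ((p + ε) / p) + (1 - p - ε) * Real.log ((1 - p - ε) / (1 - p))

lemma mul_log_div (a b : ℝ) (hb : b ≠ 0) :
    a * Real.log (a / b) = a * Real.log a - a * Real.log b := by
  rcases eq_or_ne a 0 with h | h
  · simp [h]
  · rw [Real.log_div h hb]; ring

lemma k_eq (p : ℝ) (hp : 0 < p) (hp1 : p < 1) : k p = fun ε =>
    ((p + ε) * Real.log (p + ε) - (p + ε) * Real.log p) +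
      ((1 - p - ε) * Real.log (1 - p - ε) - (1 - p - ε) * Real.log (1 - p)) := by
  funext ε
  rw [k, mul_log_div _ _ hp.ne', mul_log_div _ _ (by linarith : (1:ℝ) - p ≠ 0)]

lemma k_zero (p : ℝ) (hp : 0 < p) (hp1 : p < 1) : k p 0 = 0 := by
  simp [k, div_self hp.ne', div_self (by linarith : (1:ℝ) - p ≠ 0)]

lemma k_continuous (p : ℝ) (hp : 0 < p) (hp1 : p < 1) : Continuous (k p) := by
  rw [k_eq p hp hp1]
  have h1 : Continuous (fun ε : ℝ => (p + ε) * Real.log (p + ε)) :=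
    Real.continuous_mul_log.comp (continuous_const.add continuous_id)
  have h2 : Continuous (fun ε : ℝ => (1 - p - ε) * Real.log (1 - p - ε)) :=
    Real.continuous_mul_log.comp (continuous_const.sub continuous_id)
  fun_prop

/-- Derivative of binary KL. -/
noncomputable def φ (p ε : ℝ) : ℝ :=
  Real.log (p + ε) - Real.log p - Real.log (1 - p - ε) + Real.log (1 - p)

lemma φ_zero (p : ℝ) : φ p 0 = 0 := by simp [φ]

lemma k_hasDerivAt (p ε : ℝ) (hp : 0 < p) (hp1 : p < 1)
    (h1 : 0 < p + ε) (h2 : 0 < 1 - p - ε) :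
    HasDerivAt (k p) (φ p ε) ε := by
  rw [k_eq p hp hp1]
  have ha : HasDerivAt (fun t : ℝ => p + t) 1 ε := (hasDerivAt_id ε).const_add p
  have hb : HasDerivAt (fun t : ℝ => 1 - p - t) (-1) ε := by
    simpa using ((hasDerivAt_id ε).const_sub (1 - p))
  have hla : HasDerivAt (fun t : ℝ => Real.log (p + t)) (1 / (p + ε)) ε := by
    simpa using ha.log h1.ne'
  have hlb : HasDerivAt (fun t : ℝ => Real.log (1 - p - t)) (-1 / (1 - p - ε)) ε := by
    simpa using hb.log h2.ne'
  have H1 : HasDerivAt (fun t : ℝ => (p + t) * Real.log (p + t))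
      (1 * Real.log (p + ε) + (p + ε) * (1 / (p + ε))) ε := ha.mul hla
  have H2 : HasDerivAt (fun t : ℝ => (1 - p - t) * Real.log (1 - p - t))
      ((-1) * Real.log (1 - p - ε) + (1 - p - ε) * (-1 / (1 - p - ε))) ε := hb.mul hlb
  have H3 : HasDerivAt (fun t : ℝ => (p + t) * Real.log p) (Real.log p) ε := by
    simpa using ha.mul_const (Real.log p)
  have H4 : HasDerivAt (fun t : ℝ => (1 - p - t) * Real.log (1 - p)) (-Real.log (1 - p)) ε := by
    simpa using hb.mul_const (Real.log (1 - p))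
  have := (H1.sub H3).add (H2.sub H4)
  refine this.congr_deriv ?_
  field_simp [φ]
  unfold φ; ring

lemma φ_hasDerivAt (p ε : ℝ) (h1 : 0 < p + ε) (h2 : 0 < 1 - p - ε) :
    HasDerivAt (φ p) (1 / (p + ε) + 1 / (1 - p - ε)) ε := by
  have ha : HasDerivAt (fun t : ℝ => p + t) 1 ε := (hasDerivAt_id ε).const_add p
  have hb : HasDerivAt (fun t : ℝ => 1 - p - t) (-1) ε := by
    simpa using ((hasDerivAt_id ε).const_sub (1 - p))
  have hla : HasDerivAt (fun t : ℝ => Real.log (p + t)) (1 / (p + ε)) ε := by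
    simpa using ha.log h1.ne'
  have hlb : HasDerivAt (fun t : ℝ => Real.log (1 - p - t)) (-1 / (1 - p - ε)) ε := by
    simpa using hb.log h2.ne'
  have := ((hla.sub_const (Real.log p)).sub hlb).add_const (Real.log (1 - p))
  refine this.congr_deriv ?_
  ring

/-- Positivity of binary KL away from 0 (binary Gibbs). -/
lemma k_pos (p ε : ℝ) (hp : 0 < p) (hp1 : p < 1)
    (h1 : -p ≤ ε) (h2 : ε ≤ 1 - p) (hne : ε ≠ 0) : 0 < k p ε := by
  rcases hne.lt_or_gt with hlt | hgt
  · -- ε < 0 : k p strictly antitone on [-p, 0]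
    have hanti : StrictAntiOn (k p) (Set.Icc (-p) 0) := by
      apply strictAntiOn_of_deriv_neg (convex_Icc _ _)
        ((k_continuous p hp hp1).continuousOn)
      intro x hx
      rw [interior_Icc] at hx
      have hx1 : 0 < p + x := by have := hx.1; linarith
      have hx2 : 0 < 1 - p - x := by have := hx.2; linarith
      rw [(k_hasDerivAt p x hp hp1 hx1 hx2).deriv]
      have l1 : Real.log (p + x) < Real.log p := Real.log_lt_log hx1 (by have := hx.2; linarith)
      have l2 : Real.log (1 - p) < Real.log (1 - p - x) :=
        Real.log_lt_log (by linarith) (by have := hx.2; linarith)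
      unfold φ; linarith
    have := hanti (Set.mem_Icc.mpr ⟨h1, hlt.le⟩) (Set.mem_Icc.mpr ⟨by linarith, le_refl 0⟩) hlt
    rwa [k_zero p hp hp1] at this
  · -- 0 < ε : k p strictly monotone on [0, 1-p]
    have hmono : StrictMonoOn (k p) (Set.Icc 0 (1 - p)) := by
      apply strictMonoOn_of_deriv_pos (convex_Icc _ _)
        ((k_continuous p hp hp1).continuousOn)
      intro x hx
      rw [interior_Icc] at hx
      have hx1 : 0 < p + x := by have := hx.1; linarith
      have hx2 : 0 < 1 - p - x := by have := hx.2; linarith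
      rw [(k_hasDerivAt p x hp hp1 hx1 hx2).deriv]
      have l1 : Real.log p < Real.log (p + x) := Real.log_lt_log hp (by have := hx.1; linarith)
      have l2 : Real.log (1 - p - x) < Real.log (1 - p) :=
        Real.log_lt_log hx2 (by have := hx.1; linarith)
      unfold φ; linarith
    have := hmono (Set.mem_Icc.mpr ⟨le_refl 0, by linarith⟩) (Set.mem_Icc.mpr ⟨hgt.le, h2⟩) hgt
    rwa [k_zero p hp hp1] at this

/-- Key contraction estimate: under a quadratic dominance condition,
`KL` at the channel output is at most `c` times `KL` at the input. -/
lemma key (p m d c : ℝ) (hp : 0 < p) (hp1 : p < 1) (hd : 0 < d)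
    (hm0 : 0 < m - d * p) (hm1 : m + d * (1 - p) < 1)
    (hq : ∀ ε : ℝ, -p ≤ ε → ε ≤ 1 - p →
      d ^ 2 * ((p + ε) * (1 - p - ε)) ≤ c * ((m + d * ε) * (1 - m - d * ε)))
    (ε : ℝ) (h1 : -p ≤ ε) (h2 : ε ≤ 1 - p) :
    k m (d * ε) ≤ c * k p ε := by
  have hm : 0 < m := by nlinarith
  have hm1' : m < 1 := by nlinarith
  -- positivity facts on the open interval
  have hposm : ∀ t : ℝ, -p ≤ t → t ≤ 1 - p → 0 < m + d * t ∧ 0 < 1 - m - d * t := by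
    intro t ht1 ht2
    constructor <;> nlinarith
  set G : ℝ → ℝ := fun t => c * φ p t - d * φ m (d * t) with hG
  have hGderiv : ∀ t ∈ Set.Ioo (-p) (1 - p),
      HasDerivAt G (c * (1 / (p + t) + 1 / (1 - p - t))
        - d * ((1 / (m + d * t) + 1 / (1 - m - d * t)) * d)) t := by
    intro t ht
    have ht1 : 0 < p + t := by have := ht.1; linarith
    have ht2 : 0 < 1 - p - t := by have := ht.2; linarith
    obtain ⟨hmt1, hmt2⟩ := hposm t ht.1.le ht.2.le
    have H1 := (φ_hasDerivAt p t ht1 ht2).const_mul c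
    have hcomp : HasDerivAt (fun s : ℝ => φ m (d * s))
        ((1 / (m + d * t) + 1 / (1 - m - d * t)) * d) t := by
      have hlin : HasDerivAt (fun s : ℝ => d * s) d t := by
        simpa using (hasDerivAt_id t).const_mul d
      exact (φ_hasDerivAt m (d * t) hmt1 hmt2).comp t hlin
    exact H1.sub (hcomp.const_mul d)
  have hGnonneg : ∀ t ∈ Set.Ioo (-p) (1 - p), 0 ≤ c * (1 / (p + t) + 1 / (1 - p - t))
        - d * ((1 / (m + d * t) + 1 / (1 - m - d * t)) * d) := by
    intro t ht
    have ht1 : 0 < p + t := by have := ht.1; linarith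
    have ht2 : 0 < 1 - p - t := by have := ht.2; linarith
    obtain ⟨hmt1, hmt2⟩ := hposm t ht.1.le ht.2.le
    have hq' := hq t ht.1.le ht.2.le
    have e1 : 1 / (p + t) + 1 / (1 - p - t) = 1 / ((p + t) * (1 - p - t)) := by
      field_simp
      ring
    have e2 : 1 / (m + d * t) + 1 / (1 - m - d * t)
        = 1 / ((m + d * t) * (1 - m - d * t)) := by
      field_simp
      ring
    rw [e1, e2, sub_nonneg]
    have e3 : d * (1 / ((m + d * t) * (1 - m - d * t)) * d)
        = d ^ 2 / ((m + d * t) * (1 - m - d * t)) := by ring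
    rw [e3, mul_one_div, div_le_div_iff₀ (mul_pos hmt1 hmt2) (mul_pos ht1 ht2)]
    exact hq' 
  have hGmono : MonotoneOn G (Set.Ioo (-p) (1 - p)) := by
    apply monotoneOn_of_deriv_nonneg (convex_Ioo _ _)
    · exact fun t ht => (hGderiv t ht).continuousAt.continuousWithinAt
    · intro t ht
      rw [interior_Ioo] at ht
      exact ((hGderiv t ht).differentiableAt).differentiableWithinAt
    · intro t ht
      rw [interior_Ioo] at ht
      rw [(hGderiv t ht).deriv]
      exact hGnonneg t ht
  have hG0 : G 0 = 0 := by simp [hG, φ_zero]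
  have h0mem : (0 : ℝ) ∈ Set.Ioo (-p) (1 - p) := ⟨by linarith, by linarith⟩
  -- the target function g
  set g : ℝ → ℝ := fun t => c * k p t - k m (d * t) with hgdef
  have hgcont : Continuous g := by
    apply (continuous_const.mul (k_continuous p hp hp1)).sub
    exact (k_continuous m hm hm1').comp (continuous_const.mul continuous_id)
  have hgderiv : ∀ t ∈ Set.Ioo (-p) (1 - p), HasDerivAt g (G t) t := by
    intro t ht
    have ht1 : 0 < p + t := by have := ht.1; linarith
    have ht2 : 0 < 1 - p - t := by have := ht.2; linarith
    obtain ⟨hmt1, hmt2⟩ := hposm t ht.1.le ht.2.le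
    have H1 := (k_hasDerivAt p t hp hp1 ht1 ht2).const_mul c
    have hlin : HasDerivAt (fun s : ℝ => d * s) d t := by
      simpa using (hasDerivAt_id t).const_mul d
    have H2 : HasDerivAt (fun s : ℝ => k m (d * s)) (φ m (d * t) * d) t :=
      (k_hasDerivAt m (d * t) hm hm1' hmt1 hmt2).comp t hlin
    have := H1.sub H2
    refine this.congr_deriv ?_
    simp [hG]; ring
  have hg0 : g 0 = 0 := by
    simp [hgdef, k_zero p hp hp1, k_zero m hm hm1']
  -- show 0 ≤ g ε
  have hfinal : 0 ≤ g ε := by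
    rcases le_or_gt 0 ε with hsgn | hsgn
    · -- monotone on [0, 1-p]
      have hmono : MonotoneOn g (Set.Icc 0 (1 - p)) := by
        apply monotoneOn_of_deriv_nonneg (convex_Icc _ _) hgcont.continuousOn
        · intro t ht
          rw [interior_Icc] at ht
          have htm : t ∈ Set.Ioo (-p) (1 - p) := ⟨by linarith [ht.1], ht.2⟩
          exact (hgderiv t htm).differentiableAt.differentiableWithinAt
        · intro t ht
          rw [interior_Icc] at ht
          have htm : t ∈ Set.Ioo (-p) (1 - p) := ⟨by linarith [ht.1], ht.2⟩
          rw [(hgderiv t htm).deriv]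
          have := hGmono h0mem htm ht.1.le
          linarith [hG0 ▸ this]
      have := hmono (Set.mem_Icc.mpr ⟨le_refl 0, by linarith⟩)
        (Set.mem_Icc.mpr ⟨hsgn, h2⟩) hsgn
      linarith [hg0 ▸ this]
    · -- antitone on [-p, 0]
      have hanti : AntitoneOn g (Set.Icc (-p) 0) := by
        apply antitoneOn_of_deriv_nonpos (convex_Icc _ _) hgcont.continuousOn
        · intro t ht
          rw [interior_Icc] at ht
          have htm : t ∈ Set.Ioo (-p) (1 - p) := ⟨ht.1, by linarith [ht.2]⟩
          exact (hgderiv t htm).differentiableAt.differentiableWithinAt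
        · intro t ht
          rw [interior_Icc] at ht
          have htm : t ∈ Set.Ioo (-p) (1 - p) := ⟨ht.1, by linarith [ht.2]⟩
          rw [(hgderiv t htm).deriv]
          have := hGmono htm h0mem ht.2.le
          linarith [hG0 ▸ this]
      have := hanti (Set.mem_Icc.mpr ⟨h1, hsgn.le⟩)
        (Set.mem_Icc.mpr ⟨by linarith, le_refl 0⟩) hsgn.le
      linarith [hg0 ▸ this]
  simpa [hgdef, sub_nonneg] using hfinal

/-- Lower bound on a logarithm via rational arithmetic. -/
lemma lt_log (a L : ℝ) (n : ℕ) (hn : (0:ℝ) < n) (h1 : L / n < 1)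
    (h2 : 1 < a * (1 - L / n) ^ n) : L < Real.log a := by
  have hpow : (0:ℝ) < (1 - L / n) ^ n := pow_pos (by linarith) n
  have ha : 0 < a := by nlinarith
  rw [Real.lt_log_iff_exp_lt ha]
  have e1 : Real.exp (L / n) * (1 - L / n) ≤ 1 := by
    have hb := Real.add_one_le_exp (-(L / n))
    rw [Real.exp_neg] at hb
    have h3 : (0:ℝ) < Real.exp (L / n) := Real.exp_pos _
    calc Real.exp (L / n) * (1 - L / n) ≤ Real.exp (L / n) * (Real.exp (L / n))⁻¹ :=
          mul_le_mul_of_nonneg_left (by linarith) h3.le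
      _ = 1 := mul_inv_cancel₀ h3.ne'
  have e2 : Real.exp L = Real.exp (L / n) ^ n := by
    rw [← Real.exp_nat_mul]; congr 1; field_simp
  have e3 : Real.exp L * (1 - L / n) ^ n ≤ 1 := by
    rw [e2, ← mul_pow]
    calc (Real.exp (L / n) * (1 - L / n)) ^ n ≤ 1 ^ n := by
          apply pow_le_pow_left₀ (mul_nonneg (Real.exp_pos _).le (by linarith)) e1
      _ = 1 := one_pow n
  nlinarith [Real.exp_pos L]

/-- Upper bound on a logarithm via rational arithmetic. -/
lemma log_lt (a U : ℝ) (n : ℕ) (hn : (0:ℝ) < n) (ha : 0 < a)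
    (h1 : 0 ≤ 1 + U / n) (h2 : a < (1 + U / n) ^ n) : Real.log a < U := by
  rw [Real.log_lt_iff_lt_exp ha]
  have e1 : (1 + U / n) ^ n ≤ Real.exp (U / n) ^ n :=
    pow_le_pow_left₀ h1 (by linarith [Real.add_one_le_exp (U / n)]) n
  have e2 : Real.exp (U / n) ^ n = Real.exp U := by
    rw [← Real.exp_nat_mul]; congr 1; field_simp
  linarith

end SStarAux

namespace SStarAux

lemma kl2_eq (a b c e a' b' c' e' : ℝ) (h1 : a = a') (h2 : b = b') (h3 : c = c')
    (h4 : e = e') :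
    a * Real.log (a / b) + c * Real.log (c / e)
      = a' * Real.log (a' / b') + c' * Real.log (c' / e') := by
  rw [h1, h2, h3, h4]

lemma L1 : (-5622/10000 : ℝ) < Real.log (126/221) := by
  apply lt_log _ _ 1000 <;> norm_num
  rw [show (1000:ℕ) = 10 * 100 by norm_num, pow_mul]; norm_num

lemma L2 : (2427/10000 : ℝ) < Real.log (1322/1037) := by
  apply lt_log _ _ 1000 <;> norm_num
  rw [show (1000:ℕ) = 10 * 100 by norm_num, pow_mul]; norm_num

lemma L3 : Real.log (2/17) < (-2137/1000 : ℝ) := by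
  apply log_lt _ _ 1000 <;> norm_num
  rw [show (1000:ℕ) = 10 * 100 by norm_num, pow_mul]; norm_num

lemma L4 : Real.log 6 < (1794/1000 : ℝ) := by
  apply log_lt _ _ 1000 <;> norm_num
  rw [show (1000:ℕ) = 10 * 100 by norm_num, pow_mul]; norm_num

end SStarAux

/-- `s*` is not symmetric: for this joint distribution
`s*(X;Y) > s*(Y;X)`. -/
theorem sStar_not_symmetric :
    sStar (fun x => ∑ y, P19 x y) (fun x y => P19 x y / (∑ y', P19 x y'))
      > sStar (fun y => ∑ x, P19 x y) (fun y x => P19 x y / (∑ x', P19 x' y)) := by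
  have hP00 : P19 0 0 = 36/100 := by norm_num [P19]
  have hP01 : P19 0 1 = 49/100 := by norm_num [P19]
  have hP10 : P19 1 0 = 3/100 := by norm_num [P19]
  have hP11 : P19 1 1 = 12/100 := by norm_num [P19]
  -- B side: s*(Y;X) ≤ 19/500
  have hB : sStar (fun y => ∑ x, P19 x y) (fun y x => P19 x y / (∑ x', P19 x' y))
      ≤ 19/500 := by
    unfold sStar
    apply Real.sSup_le _ (by norm_num)
    rintro b ⟨r, ⟨hr0, hr1⟩, hrne, rfl⟩
    have hsum : r 0 + r 1 = 1 := by simpa [Fin.sum_univ_two] using hr1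
    obtain ⟨ε, hε⟩ : ∃ e : ℝ, r 0 = 39/100 + e := ⟨r 0 - 39/100, by ring⟩
    have e1 : r 1 = 1 - 39/100 - ε := by linarith
    have hεl : -(39/100 : ℝ) ≤ ε := by have := hr0 0; linarith
    have hεu : ε ≤ 1 - 39/100 := by have := hr0 1; linarith
    have hεne : ε ≠ 0 := by
      intro h
      apply hrne
      funext i
      fin_cases i
      · show r 0 = ∑ x, P19 x 0
        rw [Fin.sum_univ_two, hP00, hP10, hε, h]; norm_num
      · show r 1 = ∑ x, P19 x 1
        rw [Fin.sum_univ_two, hP01, hP11, e1, h]; norm_num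
    have hden_pos : 0 < SStarAux.k (39/100) ε :=
      SStarAux.k_pos _ _ (by norm_num) (by norm_num) hεl hεu hεne
    have hden : KL r (fun y => ∑ x, P19 x y) = SStarAux.k (39/100) ε := by
      simp only [KL, Fin.sum_univ_two, SStarAux.k]
      exact SStarAux.kl2_eq _ _ _ _ _ _ _ _ hε (by rw [hP00, hP10]; norm_num) e1
        (by rw [hP01, hP11]; norm_num)
    have hnum : KL (fun x => ∑ y, r y * (P19 x y / (∑ x', P19 x' y)))
        (fun x => ∑ y, (∑ x', P19 x' y) * (P19 x y / (∑ x'', P19 x'' y)))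
        = SStarAux.k (17/20) ((95/793) * ε) := by
      simp only [KL, Fin.sum_univ_two, SStarAux.k]
      refine SStarAux.kl2_eq _ _ _ _ _ _ _ _ ?_ ?_ ?_ ?_
      · rw [hε, e1, hP00, hP01, hP10, hP11]; ring
      · rw [hP00, hP01, hP10, hP11]; norm_num
      · rw [hε, e1, hP00, hP01, hP10, hP11]; ring
      · rw [hP00, hP01, hP10, hP11]; norm_num
    have hkey : SStarAux.k (17/20) ((95/793) * ε) ≤ (19/500) * SStarAux.k (39/100) ε := by
      apply SStarAux.key (39/100) (17/20) (95/793) (19/500) (by norm_num) (by norm_num)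
        (by norm_num) (by norm_num) (by norm_num) ?_ ε hεl hεu
      intro t _ _
      nlinarith [sq_nonneg (t - 11051/48100)]
    rw [hnum, hden, div_le_iff₀ hden_pos]
    exact hkey
  -- A side: bounded above by 1
  have hBdd : BddAbove {c : ℝ | ∃ r : Fin 2 → ℝ, IsPMF r ∧ r ≠ (fun x => ∑ y, P19 x y) ∧
      c = KL (fun y => ∑ x, r x * ((fun x y => P19 x y / (∑ y', P19 x y')) x y))
        (fun y => ∑ x, (fun x => ∑ y, P19 x y) x * ((fun x y => P19 x y / (∑ y', P19 x y')) x y))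
        / KL r (fun x => ∑ y, P19 x y)} := by
    refine ⟨1, ?_⟩
    rintro b ⟨r, ⟨hr0, hr1⟩, hrne, rfl⟩
    have hsum : r 0 + r 1 = 1 := by simpa [Fin.sum_univ_two] using hr1
    obtain ⟨ε, hε⟩ : ∃ e : ℝ, r 0 = 17/20 + e := ⟨r 0 - 17/20, by ring⟩
    have e1 : r 1 = 1 - 17/20 - ε := by linarith
    have hεl : -(17/20 : ℝ) ≤ ε := by have := hr0 0; linarith
    have hεu : ε ≤ 1 - 17/20 := by have := hr0 1; linarith
    have hεne : ε ≠ 0 := by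
      intro h
      apply hrne
      funext i
      fin_cases i
      · show r 0 = ∑ y, P19 0 y
        rw [Fin.sum_univ_two, hP00, hP01, hε, h]; norm_num
      · show r 1 = ∑ y, P19 1 y
        rw [Fin.sum_univ_two, hP10, hP11, e1, h]; norm_num
    have hden_pos : 0 < SStarAux.k (17/20) ε :=
      SStarAux.k_pos _ _ (by norm_num) (by norm_num) hεl hεu hεne
    have hden : KL r (fun x => ∑ y, P19 x y) = SStarAux.k (17/20) ε := by
      simp only [KL, Fin.sum_univ_two, SStarAux.k]
      exact SStarAux.kl2_eq _ _ _ _ _ _ _ _ hε (by rw [hP00, hP01]; norm_num) e1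
        (by rw [hP10, hP11]; norm_num)
    have hnum : KL (fun y => ∑ x, r x * (P19 x y / (∑ y', P19 x y')))
        (fun y => ∑ x, (∑ y'', P19 x y'') * (P19 x y / (∑ y', P19 x y')))
        = SStarAux.k (39/100) ((19/85) * ε) := by
      simp only [KL, Fin.sum_univ_two, SStarAux.k]
      refine SStarAux.kl2_eq _ _ _ _ _ _ _ _ ?_ ?_ ?_ ?_
      · rw [hε, e1, hP00, hP01, hP10, hP11]; ring
      · rw [hP00, hP01, hP10, hP11]; norm_num
      · rw [hε, e1, hP00, hP01, hP10, hP11]; ring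
      · rw [hP00, hP01, hP10, hP11]; norm_num
    have hkey : SStarAux.k (39/100) ((19/85) * ε) ≤ 1 * SStarAux.k (17/20) ε := by
      apply SStarAux.key (17/20) (39/100) (19/85) 1 (by norm_num) (by norm_num)
        (by norm_num) (by norm_num) (by norm_num) ?_ ε hεl hεu
      intro t ht1 ht2
      nlinarith
    show KL _ _ / KL _ _ ≤ 1
    rw [hnum, hden, div_le_iff₀ hden_pos] at *
    exact hkey
  -- witness for A side
  have hpmf : IsPMF (![1/10, 9/10] : Fin 2 → ℝ) := by
    constructor
    · intro i; fin_cases i <;> norm_num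
    · simp [Fin.sum_univ_two]; norm_num
  have hneA : (![1/10, 9/10] : Fin 2 → ℝ) ≠ fun x => ∑ y, P19 x y := by
    intro h
    have h0 := congrFun h 0
    rw [Fin.sum_univ_two, hP00, hP01] at h0
    norm_num at h0
  have hnumA : KL (fun y => ∑ x, (![1/10, 9/10] : Fin 2 → ℝ) x * (P19 x y / (∑ y', P19 x y')))
      (fun y => ∑ x, (∑ y'', P19 x y'') * (P19 x y / (∑ y', P19 x y')))
      = SStarAux.k (39/100) (-(57/340)) := by
    simp only [KL, Fin.sum_univ_two, SStarAux.k]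
    refine SStarAux.kl2_eq _ _ _ _ _ _ _ _ ?_ ?_ ?_ ?_ <;>
      · rw [hP00, hP01, hP10, hP11]; norm_num
  have hdenA : KL (![1/10, 9/10] : Fin 2 → ℝ) (fun x => ∑ y, P19 x y)
      = SStarAux.k (17/20) (-(3/4)) := by
    simp only [KL, Fin.sum_univ_two, SStarAux.k]
    refine SStarAux.kl2_eq _ _ _ _ _ _ _ _ ?_ ?_ ?_ ?_
    · norm_num
    · rw [hP00, hP01]; norm_num
    · norm_num
    · rw [hP10, hP11]; norm_num
  have hdenA_pos : 0 < SStarAux.k (17/20) (-(3/4)) :=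
    SStarAux.k_pos _ _ (by norm_num) (by norm_num) (by norm_num) (by norm_num) (by norm_num)
  have hE1 : SStarAux.k (39/100) (-(57/340))
      = (189/850) * Real.log (126/221) + (661/850) * Real.log (1322/1037) := by
    unfold SStarAux.k
    norm_num
  have hE2 : SStarAux.k (17/20) (-(3/4))
      = (1/10) * Real.log (2/17) + (9/10) * Real.log 6 := by
    unfold SStarAux.k
    norm_num
  have hvalgt : (19/500 : ℝ) < SStarAux.k (39/100) (-(57/340)) / SStarAux.k (17/20) (-(3/4)) := by
    rw [lt_div_iff₀ hdenA_pos, hE1, hE2]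
    have := SStarAux.L1; have := SStarAux.L2; have := SStarAux.L3; have := SStarAux.L4
    nlinarith [SStarAux.L1, SStarAux.L2, SStarAux.L3, SStarAux.L4]
  have hA : SStarAux.k (39/100) (-(57/340)) / SStarAux.k (17/20) (-(3/4))
      ≤ sStar (fun x => ∑ y, P19 x y) (fun x y => P19 x y / (∑ y', P19 x y')) := by
    unfold sStar
    apply le_csSup hBdd
    refine ⟨![1/10, 9/10], hpmf, hneA, ?_⟩
    rw [← hnumA, ← hdenA]
  calc sStar (fun y => ∑ x, P19 x y) (fun y x => P19 x y / (∑ x', P19 x' y))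
      ≤ 19/500 := hB
    _ < SStarAux.k (39/100) (-(57/340)) / SStarAux.k (17/20) (-(3/4)) := hvalgt
    _ ≤ _ := hA
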